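/- Let Φ denote the cumulative distribution function of the standard Gaussian measure N(0,1) on ℝ. Let H and G be square-integrable real-valued random variables with σ_d := √(Var(H) + Var(G) − 2 Cov(H,G)) > 0 and σ_i := √(2 Var(H) + 2 Var(G)). Then for every t ∈ ℝ and every Δ ≥ 0, Φ(t − Δ/σ_d) ≤ Φ(t − Δ/σ_i); moreover, if Δ > 0 and Var(H + G) > 0, the inequality is strict. -/

import Mathlib

open MeasureTheory ProbabilityTheory

lemma gaussian_cdf_strictMono : StrictMono (ProbabilityTheory.cdf (gaussianReal 0 1)) := by
  intro a b hab
  set ν := gaussianReal 0 1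
  have hIoc : ν (Set.Ioc a b) ≠ 0 := by
    have : ν (Set.Ioc a b) = 0 ↔ volume ({x | gaussianPDF 0 1 x ≠ 0} ∩ Set.Ioc a b) = 0 := by
      rw [show ν = volume.withDensity (gaussianPDF 0 1) from
        gaussianReal_of_var_ne_zero 0 one_ne_zero]
      exact withDensity_apply_eq_zero (measurable_gaussianPDF 0 1)
    rw [Ne, this]
    have hset : {x | gaussianPDF 0 1 x ≠ 0} ∩ Set.Ioc a b = Set.Ioc a b := by
      apply Set.inter_eq_self_of_subset_right
      intro x _
      exact (gaussianPDF_pos 0 one_ne_zero x).ne'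
    rw [hset, Real.volume_Ioc]
    simp only [ne_eq, ENNReal.ofReal_eq_zero, not_le]
    linarith
  have hunion : Set.Iic a ∪ Set.Ioc a b = Set.Iic b := Set.Iic_union_Ioc_eq_Iic hab.le
  have hmeas : ν (Set.Iic b) = ν (Set.Iic a) + ν (Set.Ioc a b) := by
    rw [← hunion, measure_union (Set.Iic_disjoint_Ioc le_rfl) measurableSet_Ioc]
  have hlt : ν (Set.Iic a) < ν (Set.Iic b) := by
    rw [hmeas]
    exact ENNReal.lt_add_right (measure_ne_top ν _) hIoc
  rw [cdf_eq_real, cdf_eq_real]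
  exact ENNReal.toReal_strict_mono (measure_ne_top ν _) hlt

/-- **The dependent test is more powerful** (Theorem 3.4).
With `Φ` the standard Gaussian CDF, `σ_d = √(Var H + Var G − 2 Cov(H,G)) > 0` and
`σ_i = √(2 Var H + 2 Var G)`, for every `t` and every `Δ ≥ 0`,
`Φ(t − Δ/σ_d) ≤ Φ(t − Δ/σ_i)`, with strict inequality when `Δ > 0` and `Var(H+G) > 0`. -/
theorem stmt_12
    {Ω : Type*} [MeasurableSpace Ω] (μ : Measure Ω) [IsProbabilityMeasure μ]
    (H G : Ω → ℝ) (hH : MemLp H 2 μ) (hG : MemLp G 2 μ)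
    (Φ : ℝ → ℝ) (hΦ : ∀ t, Φ t = ProbabilityTheory.cdf (gaussianReal 0 1) t)
    (varH varG varHG cov : ℝ)
    (hvarH : varH = ∫ ω, (H ω - ∫ ω', H ω' ∂μ) ^ 2 ∂μ)
    (hvarG : varG = ∫ ω, (G ω - ∫ ω', G ω' ∂μ) ^ 2 ∂μ)
    (hvarHG : varHG = ∫ ω, ((H ω + G ω) - ∫ ω', (H ω' + G ω') ∂μ) ^ 2 ∂μ)
    (hcov : cov = ∫ ω, (H ω - ∫ ω', H ω' ∂μ) * (G ω - ∫ ω', G ω' ∂μ) ∂μ)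
    (σd σi : ℝ)
    (hσd : σd = Real.sqrt (varH + varG - 2 * cov))
    (hσi : σi = Real.sqrt (2 * varH + 2 * varG))
    (hσd_pos : 0 < σd) :
    ∀ t Δ : ℝ, 0 ≤ Δ →
      Φ (t - Δ / σd) ≤ Φ (t - Δ / σi) ∧
        (0 < Δ → 0 < varHG → Φ (t - Δ / σd) < Φ (t - Δ / σi)) := by
  -- centered variables
  set mH := ∫ ω', H ω' ∂μ with hmH
  set mG := ∫ ω', G ω' ∂μ with hmG
  have hf : MemLp (fun ω => H ω - mH) 2 μ := hH.sub (memLp_const mH)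
  have hg : MemLp (fun ω => G ω - mG) 2 μ := hG.sub (memLp_const mG)
  have hfg : MemLp (fun ω => (H ω - mH) + (G ω - mG)) 2 μ := hf.add hg
  have hif : Integrable (fun ω => (H ω - mH) ^ 2) μ := hf.integrable_sq
  have hig : Integrable (fun ω => (G ω - mG) ^ 2) μ := hg.integrable_sq
  have hifg : Integrable (fun ω => ((H ω - mH) + (G ω - mG)) ^ 2) μ := hfg.integrable_sq
  -- mean of sum
  have hmean : ∫ ω', (H ω' + G ω') ∂μ = mH + mG :=
    integral_add (hH.integrable one_le_two) (hG.integrable one_le_two)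
  -- varHG in centered form
  have hvarHG' : varHG = ∫ ω, ((H ω - mH) + (G ω - mG)) ^ 2 ∂μ := by
    rw [hvarHG, hmean]
    congr 1
    funext ω
    ring
  -- covariance via polarization
  have hcov' : cov = (varHG - varH - varG) / 2 := by
    rw [hcov, hvarHG', hvarH, hvarG]
    have : (fun ω => (H ω - mH) * (G ω - mG))
        = fun ω => (((H ω - mH) + (G ω - mG)) ^ 2 - (H ω - mH) ^ 2 - (G ω - mG) ^ 2) / 2 := by
      funext ω; ring
    have h1 : Integrable (fun ω => (H ω - mH + (G ω - mG)) ^ 2 - (H ω - mH) ^ 2) μ :=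
      hifg.sub hif
    rw [this, integral_div, integral_sub h1 hig, integral_sub hifg hif]
  have hvarHG_nonneg : 0 ≤ varHG := by
    rw [hvarHG']
    exact integral_nonneg fun ω => sq_nonneg _
  -- key algebraic inequality
  have hkey : varH + varG - 2 * cov = 2 * varH + 2 * varG - varHG := by
    rw [hcov']; ring
  have hσ_le : σd ≤ σi := by
    rw [hσd, hσi, hkey]
    exact Real.sqrt_le_sqrt (by linarith)
  have hσi_pos : 0 < σi := lt_of_lt_of_le hσd_pos hσ_le
  intro t Δ hΔ
  constructor
  · -- weak inequality
    rw [hΦ, hΦ]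
    apply monotone_cdf
    have : Δ / σi ≤ Δ / σd := by gcongr
    linarith
  · intro hΔpos hvarHGpos
    have hσ_lt : σd < σi := by
      rw [hσd, hσi, hkey]
      have h0 : 0 < varH + varG - 2 * cov := Real.sqrt_pos.mp (hσd ▸ hσd_pos)
      apply Real.sqrt_lt_sqrt
      · linarith
      · linarith
    rw [hΦ, hΦ]
    apply gaussian_cdf_strictMono
    have : Δ / σi < Δ / σd := by gcongr
    linarith
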